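/- Fix m, l, g > 0 and ρ ∈ ℝ with ρ ≠ 0 and ρ ≠ m. Let Ω₁, Ω₂ : ℝ → ℝ and v, Γ : ℝ → ℝ³ solve the spherical-pendulum closed-loop system. Then the pair (Ω₁, Ω₂, Γ) satisfies the decoupled modified-gravity pendulum equations: Ω₁'(t) = (ρ g / ((ρ − m) l)) Γ₂(t) and Ω₂'(t) = −(ρ g / ((ρ − m) l)) Γ₁(t) for all t; in particular these equations do not involve v. -/

import Mathlib

open Matrix

/-- The spherical-pendulum closed-loop system: with `Ω = (Ω₁, Ω₂, 0)`,
`μ = (m l² Ω₁ − m l v₂, m l² Ω₂ + m l v₁, 0)` and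
`p = (ρ v₁ + m l Ω₂, ρ v₂ − m l Ω₁, ρ v₃)`, the first two components of
`μ' = μ × Ω + p × v − m g l (e₃ × Γ)` hold, together with `p' = p × Ω` and
`Γ' = Γ × Ω`. -/
def SphPendCL (m l g ρ : ℝ) (Ω₁ Ω₂ : ℝ → ℝ) (v Γ : ℝ → Fin 3 → ℝ) : Prop :=
  let Ω : ℝ → Fin 3 → ℝ := fun t => ![Ω₁ t, Ω₂ t, 0]
  let μ : ℝ → Fin 3 → ℝ := fun t =>
    ![m * l ^ 2 * Ω₁ t - m * l * v t 1, m * l ^ 2 * Ω₂ t + m * l * v t 0, 0]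
  let p : ℝ → Fin 3 → ℝ := fun t =>
    ![ρ * v t 0 + m * l * Ω₂ t, ρ * v t 1 - m * l * Ω₁ t, ρ * v t 2]
  Differentiable ℝ Ω₁ ∧ Differentiable ℝ Ω₂ ∧ Differentiable ℝ v ∧ Differentiable ℝ Γ ∧
  (∀ t, deriv μ t 0
      = (μ t ⨯₃ Ω t + p t ⨯₃ v t - (m * g * l) • (![(0 : ℝ), 0, 1] ⨯₃ Γ t)) 0) ∧
  (∀ t, deriv μ t 1
      = (μ t ⨯₃ Ω t + p t ⨯₃ v t - (m * g * l) • (![(0 : ℝ), 0, 1] ⨯₃ Γ t)) 1) ∧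
  (∀ t, deriv p t = p t ⨯₃ Ω t) ∧
  (∀ t, deriv Γ t = Γ t ⨯₃ Ω t)

lemma deriv_vec3 (f g h : ℝ → ℝ) (t : ℝ) (hf : DifferentiableAt ℝ f t)
    (hg : DifferentiableAt ℝ g t) (hh : DifferentiableAt ℝ h t) :
    deriv (fun s => ![f s, g s, h s]) t = ![deriv f t, deriv g t, deriv h t] := by
  have := deriv_pi (φ := fun s => ![f s, g s, h s]) (x := t) (fun i => by
    fin_cases i <;> simp only [Matrix.cons_val_zero, Matrix.cons_val_one, Matrix.head_cons,
      Matrix.cons_val_two, Matrix.tail_cons] <;> assumption)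
  rw [this]
  funext i
  fin_cases i <;> simp [Matrix.cons_val_two, Matrix.tail_cons]

/-- Along solutions of the spherical-pendulum closed-loop system, `(Ω₁, Ω₂, Γ)` satisfy
the decoupled modified-gravity pendulum equations
`Ω₁' = (ρg/((ρ−m)l)) Γ₂`, `Ω₂' = −(ρg/((ρ−m)l)) Γ₁`, which do not involve `v`. -/
theorem sphPend_decoupled (m l g ρ : ℝ) (hm : 0 < m) (hl : 0 < l) (hg : 0 < g)
    (hρ : ρ ≠ 0) (hρm : ρ ≠ m)
    (Ω₁ Ω₂ : ℝ → ℝ) (v Γ : ℝ → Fin 3 → ℝ) (hsol : SphPendCL m l g ρ Ω₁ Ω₂ v Γ) :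
    ∀ t, deriv Ω₁ t = ρ * g / ((ρ - m) * l) * Γ t 1 ∧
         deriv Ω₂ t = -(ρ * g / ((ρ - m) * l)) * Γ t 0 := by
  obtain ⟨hΩ₁, hΩ₂, hv, hΓ, hμ0, hμ1, hp, hΓ'⟩ := hsol
  intro t
  have hv0 : Differentiable ℝ (fun s => v s 0) := fun s => (differentiable_pi.mp hv 0) s
  have hv1 : Differentiable ℝ (fun s => v s 1) := fun s => (differentiable_pi.mp hv 1) s
  have hv2 : Differentiable ℝ (fun s => v s 2) := fun s => (differentiable_pi.mp hv 2) s
  set dΩ₁ := deriv Ω₁ t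
  set dΩ₂ := deriv Ω₂ t
  set dv0 := deriv (fun s => v s 0) t
  set dv1 := deriv (fun s => v s 1) t
  have dA1 : deriv (fun s => m * l ^ 2 * Ω₁ s - m * l * v s 1) t = m * l ^ 2 * dΩ₁ - m * l * dv1 := by
    rw [deriv_fun_sub (by fun_prop) (by fun_prop), deriv_const_mul _ (hΩ₁ t), deriv_const_mul _ (hv1 t)]
  have dA2 : deriv (fun s => m * l ^ 2 * Ω₂ s + m * l * v s 0) t = m * l ^ 2 * dΩ₂ + m * l * dv0 := by
    rw [deriv_fun_add (by fun_prop) (by fun_prop), deriv_const_mul _ (hΩ₂ t), deriv_const_mul _ (hv0 t)]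
  have dB1 : deriv (fun s => ρ * v s 0 + m * l * Ω₂ s) t = ρ * dv0 + m * l * dΩ₂ := by
    rw [deriv_fun_add (by fun_prop) (by fun_prop), deriv_const_mul _ (hv0 t), deriv_const_mul _ (hΩ₂ t)]
  have dB2 : deriv (fun s => ρ * v s 1 - m * l * Ω₁ s) t = ρ * dv1 - m * l * dΩ₁ := by
    rw [deriv_fun_sub (by fun_prop) (by fun_prop), deriv_const_mul _ (hv1 t), deriv_const_mul _ (hΩ₁ t)]
  have hμder : deriv (fun s =>
      ![m * l ^ 2 * Ω₁ s - m * l * v s 1, m * l ^ 2 * Ω₂ s + m * l * v s 0, (0:ℝ)]) t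
      = ![m * l ^ 2 * dΩ₁ - m * l * dv1, m * l ^ 2 * dΩ₂ + m * l * dv0, 0] := by
    rw [deriv_vec3 _ _ _ t (by fun_prop) (by fun_prop) (by fun_prop)]
    simp [dA1, dA2]
  have hpder : deriv (fun s =>
      ![ρ * v s 0 + m * l * Ω₂ s, ρ * v s 1 - m * l * Ω₁ s, ρ * v s 2]) t
      = ![ρ * dv0 + m * l * dΩ₂, ρ * dv1 - m * l * dΩ₁, ρ * deriv (fun s => v s 2) t] := by
    rw [deriv_vec3 _ _ _ t (by fun_prop) (by fun_prop) (by fun_prop)]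
    simp [dB1, dB2, deriv_const_mul _ (hv2 t)]
  have E1 := hμ0 t
  have E2 := hμ1 t
  have E3 := congrFun (hp t) 0
  have E4 := congrFun (hp t) 1
  rw [hμder] at E1 E2
  rw [hpder] at E3 E4
  simp only [cross_apply, Pi.add_apply, Pi.sub_apply, Pi.smul_apply, smul_eq_mul,
    Matrix.cons_val_zero, Matrix.cons_val_one, Matrix.head_cons,
    Matrix.cons_val_two, Matrix.tail_cons] at E1 E2 E3 E4
  have hl' : l ≠ 0 := ne_of_gt hl
  have hm' : m ≠ 0 := ne_of_gt hm
  have hρm' : ρ - m ≠ 0 := sub_ne_zero.mpr hρm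
  have hml : (m * l : ℝ) ≠ 0 := mul_ne_zero hm' hl'
  have K1 : m * l * l * (ρ - m) * dΩ₁ = ρ * m * g * l * Γ t 1 := by
    linear_combination ρ * E1 + (m * l) * E4
  have K2 : m * l * l * (ρ - m) * dΩ₂ = -(ρ * m * g * l * Γ t 0) := by
    linear_combination ρ * E2 - (m * l) * E3
  have h1 : dΩ₁ * ((ρ - m) * l) = ρ * g * Γ t 1 := by
    apply mul_left_cancel₀ hml; linear_combination K1
  have h2 : dΩ₂ * ((ρ - m) * l) = -(ρ * g * Γ t 0) := by
    apply mul_left_cancel₀ hml; linear_combination K2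
  constructor
  · field_simp
    linear_combination h1
  · field_simp
    linear_combination h2
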